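/- There is at most one function χ* assigning an integer to every semialgebraic set such that: (i) χ* is additive on finite disjoint unions of semialgebraic sets; (ii) χ* agrees with the Euler characteristic χ on compact semialgebraic sets; (iii) χ* is invariant under semialgebraic homeomorphisms. -/

import Mathlib

open MvPolynomial CategoryTheory

/- Singular homology with rational coefficients, its Betti numbers, and the Euler
characteristic predicate `HasEulerChar X χ` (Betti numbers finite, eventually zero,
alternating sum `χ`). -/

noncomputable def singularChainComplex (X : TopCat) : ChainComplex (ModuleCat ℚ) ℕ :=
  (AlgebraicTopology.alternatingFaceMapComplex (ModuleCat ℚ)).obj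
    ((TopCat.toSSet.obj X) ⋙ ModuleCat.free ℚ)

noncomputable def SingularHomology (X : Type) [TopologicalSpace X] (k : ℕ) :
    ModuleCat ℚ :=
  (singularChainComplex (TopCat.of X)).homology k

noncomputable def betti (X : Type) [TopologicalSpace X] (k : ℕ) : ℕ :=
  Module.finrank ℚ (SingularHomology X k)

def HasEulerChar (X : Type) [TopologicalSpace X] (χ : ℤ) : Prop :=
  ∃ d : ℕ, (∀ k, d < k → betti X k = 0) ∧
    (∀ k, Module.Finite ℚ (SingularHomology X k)) ∧
    χ = ∑ k ∈ Finset.range (d + 1), (-1) ^ k * (betti X k : ℤ)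

/-- A semialgebraic subset of `ℝ^σ`: a finite union of basic semialgebraic sets. -/
def IsSemialgebraic {σ : Type} (S : Set (σ → ℝ)) : Prop :=
  ∃ (N M : ℕ) (p : Fin N → MvPolynomial σ ℝ) (q : Fin N → Fin M → MvPolynomial σ ℝ),
    S = ⋃ i, {x | eval x (p i) = 0 ∧ ∀ j, 0 < eval x (q i j)}

/-- `S ⊆ ℝⁿ` and `T ⊆ ℝᵐ` are semialgebraically homeomorphic: there is a homeomorphism
between them whose graph is a semialgebraic subset of `ℝ^{n+m}`. -/
def SemialgHomeo {n m : ℕ} (S : Set (Fin n → ℝ)) (T : Set (Fin m → ℝ)) : Prop :=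
  ∃ e : ↥S ≃ₜ ↥T, IsSemialgebraic
    {z : Fin (n + m) → ℝ | ∃ x : ↥S,
      (∀ i : Fin n, z (Fin.castAdd m i) = (x : Fin n → ℝ) i) ∧
      (∀ j : Fin m, z (Fin.natAdd n j) = ((e x : ↥T) : Fin m → ℝ) j)}

/-- A modified Euler characteristic in the sense of Yao: an integer-valued invariant of
semialgebraic sets which is (i) additive on finite disjoint unions, (ii) equal to the
(singular) Euler characteristic on compact semialgebraic sets, and (iii) invariant
under semialgebraic homeomorphisms. -/
structure ModifiedEulerChar where
  toFun : ∀ n : ℕ, Set (Fin n → ℝ) → ℤ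
  additive : ∀ (n N : ℕ) (S : Fin N → Set (Fin n → ℝ)),
    (∀ i, IsSemialgebraic (S i)) →
    (Pairwise fun i j => Disjoint (S i) (S j)) →
    toFun n (⋃ i, S i) = ∑ i, toFun n (S i)
  compact_eq : ∀ (n : ℕ) (S : Set (Fin n → ℝ)), IsSemialgebraic S → IsCompact S →
    HasEulerChar ↥S (toFun n S)
  homeo_inv : ∀ (n m : ℕ) (S : Set (Fin n → ℝ)) (T : Set (Fin m → ℝ)),
    IsSemialgebraic S → IsSemialgebraic T → SemialgHomeo S T →
    toFun n S = toFun m T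


section Aux
open MvPolynomial

variable {σ : Type}

lemma forall_fin_add {a b : ℕ} {P : Fin (a + b) → Prop} :
    (∀ i, P i) ↔ (∀ i, P (Fin.castAdd b i)) ∧ (∀ i, P (Fin.natAdd a i)) := by
  constructor
  · exact fun h => ⟨fun i => h _, fun i => h _⟩
  · rintro ⟨h1, h2⟩ i
    exact Fin.addCases h1 h2 i

lemma exists_fin_add {a b : ℕ} {P : Fin (a + b) → Prop} :
    (∃ i, P i) ↔ (∃ i, P (Fin.castAdd b i)) ∨ (∃ i, P (Fin.natAdd a i)) := by
  constructor
  · rintro ⟨i, hi⟩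
    exact Fin.addCases (motive := fun i => P i → _)
      (fun i hi => Or.inl ⟨i, hi⟩) (fun i hi => Or.inr ⟨i, hi⟩) i hi
  · rintro (⟨i, hi⟩ | ⟨i, hi⟩) <;> exact ⟨_, hi⟩

lemma sa_basic (p : MvPolynomial σ ℝ) {M : ℕ} (q : Fin M → MvPolynomial σ ℝ) :
    IsSemialgebraic {x | eval x p = 0 ∧ ∀ j, 0 < eval x (q j)} :=
  ⟨1, M, fun _ => p, fun _ => q, by rw [Set.iUnion_const]⟩

lemma sa_zero (p : MvPolynomial σ ℝ) : IsSemialgebraic {x | eval x p = 0} := by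
  have h := sa_basic p (M := 0) Fin.elim0
  simpa using h

lemma sa_pos (q : MvPolynomial σ ℝ) : IsSemialgebraic {x | 0 < eval x q} := by
  have h := sa_basic (0 : MvPolynomial σ ℝ) (M := 1) (fun _ => q)
  simpa using h

lemma sa_empty : IsSemialgebraic (∅ : Set (σ → ℝ)) :=
  ⟨0, 0, Fin.elim0, Fin.elim0, by simp⟩

lemma sa_univ : IsSemialgebraic (Set.univ : Set (σ → ℝ)) := by
  have h := sa_zero (0 : MvPolynomial σ ℝ)
  simpa [Set.eq_univ_iff_forall] using h

lemma sa_union {S T : Set (σ → ℝ)} (hS : IsSemialgebraic S) (hT : IsSemialgebraic T) :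
    IsSemialgebraic (S ∪ T) := by
  obtain ⟨N₁, M₁, p₁, q₁, rfl⟩ := hS
  obtain ⟨N₂, M₂, p₂, q₂, rfl⟩ := hT
  refine ⟨N₁ + N₂, M₁ + M₂, Fin.append p₁ p₂,
    Fin.addCases (fun i => Fin.append (q₁ i) fun _ => 1)
      (fun i => Fin.append (fun _ => 1) (q₂ i)), ?_⟩
  ext x
  simp only [Set.mem_union, Set.mem_iUnion, Set.mem_setOf_eq, exists_fin_add,
    Fin.addCases_left, Fin.addCases_right, Fin.append_left, Fin.append_right,
    forall_fin_add, map_one, zero_lt_one, forall_const, and_true, true_and,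
    implies_true]

lemma sa_inter {S T : Set (σ → ℝ)} (hS : IsSemialgebraic S) (hT : IsSemialgebraic T) :
    IsSemialgebraic (S ∩ T) := by
  obtain ⟨N₁, M₁, p₁, q₁, rfl⟩ := hS
  obtain ⟨N₂, M₂, p₂, q₂, rfl⟩ := hT
  refine ⟨N₁ * N₂, M₁ + M₂,
    fun k => (p₁ (finProdFinEquiv.symm k).1) ^ 2 + (p₂ (finProdFinEquiv.symm k).2) ^ 2,
    fun k => Fin.append (q₁ (finProdFinEquiv.symm k).1) (q₂ (finProdFinEquiv.symm k).2), ?_⟩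
  have key : ∀ (a b : ℝ), a ^ 2 + b ^ 2 = 0 ↔ a = 0 ∧ b = 0 := by
    intro a b
    rw [add_eq_zero_iff_of_nonneg (sq_nonneg a) (sq_nonneg b), pow_eq_zero_iff (two_ne_zero),
      pow_eq_zero_iff (two_ne_zero)]
  ext x
  simp only [Set.mem_inter_iff, Set.mem_iUnion, Set.mem_setOf_eq]
  constructor
  · rintro ⟨⟨i₁, h1, h2⟩, ⟨i₂, h3, h4⟩⟩
    refine ⟨finProdFinEquiv (i₁, i₂), ?_, ?_⟩
    · simp only [Equiv.symm_apply_apply, map_add, map_pow]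
      rw [h1, h3]; ring
    · rw [forall_fin_add]
      refine ⟨fun j => ?_, fun j => ?_⟩
      · simp [Equiv.symm_apply_apply, Fin.append_left, h2 j]
      · simp [Equiv.symm_apply_apply, Fin.append_right, h4 j]
  · rintro ⟨k, h1, h2⟩
    rw [forall_fin_add] at h2
    simp only [map_add, map_pow] at h1
    rw [key] at h1
    exact ⟨⟨(finProdFinEquiv.symm k).1, h1.1, fun j => by
        simpa [Fin.append_left] using h2.1 j⟩,
      ⟨(finProdFinEquiv.symm k).2, h1.2, fun j => by
        simpa [Fin.append_right] using h2.2 j⟩⟩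

lemma sa_biUnion {ι : Type} {s : Finset ι} {f : ι → Set (σ → ℝ)}
    (h : ∀ i ∈ s, IsSemialgebraic (f i)) : IsSemialgebraic (⋃ i ∈ s, f i) := by
  classical
  induction s using Finset.induction_on with
  | empty => simpa using sa_empty
  | @insert a s ha ih =>
    rw [Finset.set_biUnion_insert]
    exact sa_union (h _ (Finset.mem_insert_self _ _))
      (ih fun i hi => h i (Finset.mem_insert_of_mem hi))

lemma sa_iUnion {ι : Type} [Fintype ι] {f : ι → Set (σ → ℝ)}
    (h : ∀ i, IsSemialgebraic (f i)) : IsSemialgebraic (⋃ i, f i) := by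
  have := sa_biUnion (s := Finset.univ) (f := f) (fun i _ => h i)
  simpa using this

lemma sa_biInter {ι : Type} {s : Finset ι} {f : ι → Set (σ → ℝ)}
    (h : ∀ i ∈ s, IsSemialgebraic (f i)) : IsSemialgebraic (⋂ i ∈ s, f i) := by
  classical
  induction s using Finset.induction_on with
  | empty => simpa using sa_univ
  | @insert a s ha ih =>
    rw [Finset.set_biInter_insert]
    exact sa_inter (h _ (Finset.mem_insert_self _ _))
      (ih fun i hi => h i (Finset.mem_insert_of_mem hi))

lemma sa_iInter {ι : Type} [Fintype ι] {f : ι → Set (σ → ℝ)}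
    (h : ∀ i, IsSemialgebraic (f i)) : IsSemialgebraic (⋂ i, f i) := by
  have := sa_biInter (s := Finset.univ) (f := f) (fun i _ => h i)
  simpa using this

lemma sa_comp {k l : ℕ} (g : Fin k → Fin l) {S : Set (Fin k → ℝ)} (hS : IsSemialgebraic S) :
    IsSemialgebraic {z : Fin l → ℝ | (fun i => z (g i)) ∈ S} := by
  obtain ⟨N, M, p, q, rfl⟩ := hS
  refine ⟨N, M, fun i => rename g (p i), fun i j => rename g (q i j), ?_⟩
  ext z
  simp [eval_rename, Function.comp_def]

end Aux

section Aux2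
open MvPolynomial

lemma hec_unique {X : Type} [TopologicalSpace X] {a b : ℤ}
    (ha : HasEulerChar X a) (hb : HasEulerChar X b) : a = b := by
  obtain ⟨d₁, hv₁, -, he₁⟩ := ha
  obtain ⟨d₂, hv₂, -, he₂⟩ := hb
  have key : ∀ d e : ℕ, d ≤ e → (∀ k, d < k → betti X k = 0) →
      (∑ k ∈ Finset.range (d + 1), (-1:ℤ) ^ k * (betti X k : ℤ))
        = ∑ k ∈ Finset.range (e + 1), (-1:ℤ) ^ k * (betti X k : ℤ) := by
    intro d e hde hv
    refine Finset.sum_subset (Finset.range_subset_range.2 (by omega)) ?_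
    intro k hk hk'
    have hz : betti X k = 0 := by
      refine hv k ?_
      simp only [Finset.mem_range] at hk hk'
      omega
    simp [hz]
  rcases le_total d₁ d₂ with h | h
  · rw [he₁, he₂, key d₁ d₂ h hv₁]
  · rw [he₁, he₂, key d₂ d₁ h hv₂]

lemma chi_empty (χ : ModifiedEulerChar) (n : ℕ) : χ.toFun n (∅ : Set (Fin n → ℝ)) = 0 := by
  have h := χ.additive n 0 Fin.elim0 (fun i => i.elim0) (fun i => i.elim0)
  simpa using h

lemma chi_pair (χ : ModifiedEulerChar) (n : ℕ) {A B : Set (Fin n → ℝ)}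
    (hA : IsSemialgebraic A) (hB : IsSemialgebraic B) (hAB : Disjoint A B) :
    χ.toFun n (A ∪ B) = χ.toFun n A + χ.toFun n B := by
  have hpw : Pairwise fun i j => Disjoint (![A, B] i) (![A, B] j) := by
    intro i j hij
    fin_cases i <;> fin_cases j
    · exact absurd rfl hij
    · simpa using hAB
    · simpa using hAB.symm
    · exact absurd rfl hij
  have hsa : ∀ i, IsSemialgebraic (![A, B] i) := by
    intro i; fin_cases i <;> simpa
  have h := χ.additive n 2 ![A, B] hsa hpw
  have hu : (⋃ i, ![A, B] i) = A ∪ B := by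
    ext x; simp [Set.mem_iUnion, Fin.exists_fin_two]
  rw [hu] at h
  rw [h, Fin.sum_univ_two]
  simp

lemma chi_fintype (χ : ModifiedEulerChar) (n : ℕ) {ι : Type} [Fintype ι]
    (S : ι → Set (Fin n → ℝ)) (hsa : ∀ i, IsSemialgebraic (S i))
    (hpw : Pairwise fun i j => Disjoint (S i) (S j)) :
    χ.toFun n (⋃ i, S i) = ∑ i, χ.toFun n (S i) := by
  classical
  let e := Fintype.equivFin ι
  have hu : (⋃ i, S i) = ⋃ k, S (e.symm k) := by
    ext x
    simp only [Set.mem_iUnion]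
    exact ⟨fun ⟨i, h⟩ => ⟨e i, by simpa using h⟩, fun ⟨k, h⟩ => ⟨e.symm k, h⟩⟩
  have h := χ.additive n (Fintype.card ι) (fun k => S (e.symm k))
      (fun k => hsa _) (fun k k' hkk' => hpw (e.symm.injective.ne hkk'))
  rw [hu, h]
  exact Equiv.sum_comp e.symm (fun i => χ.toFun n (S i))

lemma continuous_eval' {k : ℕ} (p : MvPolynomial (Fin k) ℝ) :
    Continuous fun x : Fin k → ℝ => eval x p := by
  induction p using MvPolynomial.induction_on with
  | C a => simpa using continuous_const
  | add p q hp hq => simp only [map_add]; exact hp.add hq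
  | mul_X p i hp =>
    simp only [map_mul, eval_X]
    exact hp.mul (continuous_apply i)

noncomputable def rhoP (k : ℕ) : MvPolynomial (Fin k) ℝ := ∑ i, X i ^ 2

lemma eval_rhoP {k : ℕ} (x : Fin k → ℝ) : eval x (rhoP k) = ∑ i, x i ^ 2 := by
  simp [rhoP]

lemma rho_nonneg {k : ℕ} (x : Fin k → ℝ) : 0 ≤ ∑ i, x i ^ 2 :=
  Finset.sum_nonneg fun i _ => sq_nonneg _

lemma compact_of_closed_bounded {k : ℕ} {C : Set (Fin k → ℝ)} (hC : IsClosed C)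
    {R : ℝ} (hR : ∀ x ∈ C, (∑ i, x i ^ 2) ≤ R) : IsCompact C := by
  rw [Metric.isCompact_iff_isClosed_bounded]
  refine ⟨hC, ?_⟩
  rw [isBounded_iff_forall_norm_le]
  refine ⟨Real.sqrt R, fun x hx => ?_⟩
  rw [pi_norm_le_iff_of_nonneg (Real.sqrt_nonneg R)]
  intro i
  rw [Real.norm_eq_abs, ← Real.sqrt_sq_eq_abs]
  refine Real.sqrt_le_sqrt ?_
  calc x i ^ 2 ≤ ∑ j, x j ^ 2 :=
        Finset.single_le_sum (f := fun j => x j ^ 2) (fun j _ => sq_nonneg _)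
          (Finset.mem_univ i)
    _ ≤ R := hR x hx

lemma eq_on_compact (χ₁ χ₂ : ModifiedEulerChar) {n : ℕ} {S : Set (Fin n → ℝ)}
    (hS : IsSemialgebraic S) (hK : IsCompact S) : χ₁.toFun n S = χ₂.toFun n S :=
  hec_unique (χ₁.compact_eq n S hS hK) (χ₂.compact_eq n S hS hK)

end Aux2

section Aux3
open MvPolynomial

variable {σ : Type}

/-- Sign condition: `0 ↦ = 0`, `1 ↦ > 0`, `2 ↦ < 0`. -/
def Cond (k : Fin 3) (v : ℝ) : Prop :=
  if k = 0 then v = 0 else if k = 1 then 0 < v else v < 0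

lemma cond_unique {k k' : Fin 3} {v : ℝ} (h : Cond k v) (h' : Cond k' v) : k = k' := by
  unfold Cond at h h'
  fin_cases k <;> fin_cases k' <;> simp_all <;> linarith

noncomputable def sgn3 (v : ℝ) : Fin 3 :=
  if v = 0 then 0 else if 0 < v then 1 else 2

lemma cond_zero (v : ℝ) : Cond 0 v ↔ v = 0 := by simp [Cond]

lemma cond_one (v : ℝ) : Cond 1 v ↔ 0 < v := by
  have h0 : (1 : Fin 3) ≠ 0 := by decide
  simp [Cond, h0]

lemma cond_two (v : ℝ) : Cond 2 v ↔ v < 0 := by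
  have h0 : (2 : Fin 3) ≠ 0 := by decide
  have h1 : (2 : Fin 3) ≠ 1 := by decide
  simp [Cond, h0, h1]

lemma cond_sgn3 (v : ℝ) : Cond (sgn3 v) v := by
  by_cases h1 : v = 0
  · rw [sgn3, if_pos h1, cond_zero]; exact h1
  · by_cases h2 : 0 < v
    · rw [sgn3, if_neg h1, if_pos h2, cond_one]; exact h2
    · rw [sgn3, if_neg h1, if_neg h2, cond_two]
      exact lt_of_le_of_ne (not_lt.1 h2) h1

lemma sa_neg (p : MvPolynomial σ ℝ) : IsSemialgebraic {x | eval x p < 0} := by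
  have h := sa_pos (-p)
  have he : {x : σ → ℝ | 0 < eval x (-p)} = {x | eval x p < 0} := by
    ext x; simp [neg_pos]
  rwa [he] at h

lemma sa_cond (k : Fin 3) (p : MvPolynomial σ ℝ) :
    IsSemialgebraic {x | Cond k (eval x p)} := by
  fin_cases k
  · simpa [Cond] using sa_zero p
  · simpa [Cond] using sa_pos p
  · simpa [Cond] using sa_neg p

lemma sa_condC (k : Fin 3) (p : MvPolynomial σ ℝ) :
    IsSemialgebraic {x | ¬ Cond k (eval x p)} := by
  fin_cases k
  · have h := sa_union (sa_pos p) (sa_neg p)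
    have he : ({x : σ → ℝ | 0 < eval x p} ∪ {x | eval x p < 0}) = {x | ¬ Cond 0 (eval x p)} := by
      ext x
      simp only [Set.mem_union, Set.mem_setOf_eq, cond_zero]
      constructor
      · rintro (h | h) <;> intro h0 <;> rw [h0] at h <;> linarith
      · intro h; rcases lt_trichotomy (eval x p) 0 with h' | h' | h'
        · exact Or.inr h'
        · exact absurd h' h
        · exact Or.inl h'
    rwa [he] at h
  · have h := sa_union (sa_neg p) (sa_zero p)
    have he : ({x : σ → ℝ | eval x p < 0} ∪ {x | eval x p = 0}) = {x | ¬ Cond 1 (eval x p)} := by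
      ext x
      simp only [Set.mem_union, Set.mem_setOf_eq, cond_one]
      constructor
      · rintro (h | h) h' <;> linarith
      · intro h; rcases lt_trichotomy (eval x p) 0 with h' | h' | h'
        · exact Or.inl h'
        · exact Or.inr h'
        · exact absurd h' h
    rwa [he] at h
  · have h := sa_union (sa_pos p) (sa_zero p)
    have he : ({x : σ → ℝ | 0 < eval x p} ∪ {x | eval x p = 0}) = {x | ¬ Cond 2 (eval x p)} := by
      ext x
      simp only [Set.mem_union, Set.mem_setOf_eq, cond_two]
      constructor
      · rintro (h | h) h' <;> linarith
      · intro h; rcases lt_trichotomy (eval x p) 0 with h' | h' | h'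
        · exact absurd h' h
        · exact Or.inr h'
        · exact Or.inl h'
    rwa [he] at h

/-- The sign cell of a finite family of polynomials. -/
def cellSet {n : ℕ} {ι : Type} (r : ι → MvPolynomial (Fin n) ℝ) (ε : ι → Fin 3) :
    Set (Fin n → ℝ) :=
  ⋂ t, {x | Cond (ε t) (eval x (r t))}

lemma sa_cellSet {n : ℕ} {ι : Type} [Fintype ι] (r : ι → MvPolynomial (Fin n) ℝ)
    (ε : ι → Fin 3) : IsSemialgebraic (cellSet r ε) :=
  sa_iInter fun t => sa_cond (ε t) (r t)

lemma sa_le_ball {n : ℕ} (R : ℝ) :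
    IsSemialgebraic {x : Fin n → ℝ | (∑ i, x i ^ 2) ≤ R} := by
  have h := sa_union (sa_pos (C R - rhoP n)) (sa_zero (C R - rhoP n))
  have he : ({x : Fin n → ℝ | 0 < eval x (C R - rhoP n)} ∪ {x | eval x (C R - rhoP n) = 0})
      = {x | (∑ i, x i ^ 2) ≤ R} := by
    ext x
    simp only [Set.mem_union, Set.mem_setOf_eq, map_sub, eval_C, eval_rhoP]
    constructor
    · rintro (h | h) <;> linarith
    · intro h; rcases eq_or_lt_of_le h with h' | h'
      · exact Or.inr (by linarith)
      · exact Or.inl (by linarith)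
  rwa [he] at h

/-- Both modified Euler characteristics agree on a sign cell contained in a ball. -/
lemma eq_on_cell (χ₁ χ₂ : ModifiedEulerChar) {n : ℕ} {ι : Type} [Fintype ι]
    (r : ι → MvPolynomial (Fin n) ℝ) (ε : ι → Fin 3) {R : ℝ}
    (hb : ∀ x ∈ cellSet r ε, (∑ i, x i ^ 2) ≤ R) :
    χ₁.toFun n (cellSet r ε) = χ₂.toFun n (cellSet r ε) := by
  classical
  set V : Set (Fin n → ℝ) := ⋂ t : {t : ι // ε t = 0}, {x | eval x (r t.1) = 0} with hV
  set U : Set (Fin n → ℝ) := ⋂ t : {t : ι // ε t ≠ 0}, {x | Cond (ε t.1) (eval x (r t.1))}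
    with hU
  have hcell : cellSet r ε = V ∩ U := by
    ext x
    simp only [cellSet, hV, hU, Set.mem_iInter, Set.mem_inter_iff, Set.mem_setOf_eq]
    constructor
    · intro h
      refine ⟨fun t => ?_, fun t => h t.1⟩
      have ht := h t.1
      rw [t.2] at ht
      simpa [Cond] using ht
    · rintro ⟨h1, h2⟩ t
      by_cases ht : ε t = 0
      · rw [ht]
        simpa [Cond] using h1 ⟨t, ht⟩
      · exact h2 ⟨t, ht⟩
  set Ball : Set (Fin n → ℝ) := {x | (∑ i, x i ^ 2) ≤ R} with hBall
  set K : Set (Fin n → ℝ) := V ∩ Ball with hK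
  have hVclosed : IsClosed V :=
    isClosed_iInter fun t => isClosed_eq (continuous_eval' _) continuous_const
  have hBallclosed : IsClosed Ball :=
    isClosed_le (continuous_finset_sum _ fun i _ => (continuous_apply i).pow 2)
      continuous_const
  have hKclosed : IsClosed K := hVclosed.inter hBallclosed
  have hUopen : IsOpen U := by
    refine isOpen_iInter_of_finite fun t => ?_
    have h3 : ε t.1 = 1 ∨ ε t.1 = 2 := by
      have := t.2
      omega
    rcases h3 with h | h <;> rw [h]
    · have : {x : Fin n → ℝ | Cond 1 (eval x (r t.1))} = {x | 0 < eval x (r t.1)} := by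
        ext x; simp [Cond]
      rw [this]
      exact isOpen_lt continuous_const (continuous_eval' _)
    · have : {x : Fin n → ℝ | Cond 2 (eval x (r t.1))} = {x | eval x (r t.1) < 0} := by
        ext x; simp [Cond]
      rw [this]
      exact isOpen_lt (continuous_eval' _) continuous_const
  have hVsa : IsSemialgebraic V := sa_iInter fun t => sa_zero _
  have hKsa : IsSemialgebraic K := sa_inter hVsa (sa_le_ball R)
  have hKcpt : IsCompact K := compact_of_closed_bounded hKclosed (fun x hx => hx.2)
  have hcb : cellSet r ε ⊆ Ball := fun x hx => hb x hx
  have hKU : K ∩ U = cellSet r ε := by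
    rw [hcell] at hcb ⊢
    ext x
    constructor
    · rintro ⟨⟨hv, _⟩, hu⟩
      exact ⟨hv, hu⟩
    · rintro ⟨hv, hu⟩
      exact ⟨⟨hv, hcb ⟨hv, hu⟩⟩, hu⟩
  have hWclosed : IsClosed (K \ U) := hKclosed.sdiff hUopen
  have hWcpt : IsCompact (K \ U) := compact_of_closed_bounded hWclosed (fun x hx => hx.1.2)
  have hWsa : IsSemialgebraic (K \ U) := by
    have hUc : Uᶜ = ⋃ t : {t : ι // ε t ≠ 0}, {x | ¬ Cond (ε t.1) (eval x (r t.1))} := by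
      rw [hU, Set.compl_iInter]
      exact Set.iUnion_congr fun t => by rw [Set.compl_setOf]
    rw [Set.diff_eq, hUc]
    exact sa_inter hKsa (sa_iUnion fun t => sa_condC (ε t.1) (r t.1))
  have hsplit : cellSet r ε ∪ (K \ U) = K := by
    rw [← hKU]
    exact Set.inter_union_diff K U
  have hdisj : Disjoint (cellSet r ε) (K \ U) := by
    rw [← hKU]
    exact Set.disjoint_left.2 fun x hx hx' => hx'.2 hx.2
  have hcsa : IsSemialgebraic (cellSet r ε) := sa_cellSet r ε
  have h1 := chi_pair χ₁ n hcsa hWsa hdisj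
  have h2 := chi_pair χ₂ n hcsa hWsa hdisj
  rw [hsplit] at h1 h2
  have e1 := eq_on_compact χ₁ χ₂ hKsa hKcpt
  have e2 := eq_on_compact χ₁ χ₂ hWsa hWcpt
  omega

/-- Both modified Euler characteristics agree on bounded semialgebraic sets. -/
lemma eq_on_bounded (χ₁ χ₂ : ModifiedEulerChar) {n : ℕ} {S : Set (Fin n → ℝ)}
    (hS : IsSemialgebraic S) {R : ℝ} (hb : ∀ x ∈ S, (∑ i, x i ^ 2) ≤ R) :
    χ₁.toFun n S = χ₂.toFun n S := by
  classical
  obtain ⟨N, M, p, q, hSeq⟩ := hS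
  have hSsa : IsSemialgebraic S := ⟨N, M, p, q, hSeq⟩
  set ι := (Fin N ⊕ Fin N × Fin M) with hι
  set r : ι → MvPolynomial (Fin n) ℝ := Sum.elim p (fun ij => q ij.1 ij.2) with hr
  -- sign-constancy of membership in S
  have mem_transfer : ∀ (ε : ι → Fin 3) (x y : Fin n → ℝ),
      x ∈ cellSet r ε → y ∈ cellSet r ε → x ∈ S → y ∈ S := by
    intro ε x y hx hy hxS
    simp only [cellSet, Set.mem_iInter, Set.mem_setOf_eq] at hx hy
    rw [hSeq] at hxS ⊢
    rw [Set.mem_iUnion] at hxS ⊢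
    obtain ⟨i, h1, h2⟩ := hxS
    refine ⟨i, ?_, ?_⟩
    · have hk : ε (Sum.inl i) = 0 :=
        cond_unique (hx (Sum.inl i)) (show Cond 0 (eval x (r (Sum.inl i))) by
          simp [Cond, hr, h1])
      have hyt := hy (Sum.inl i)
      rw [hk] at hyt
      simpa [Cond, hr] using hyt
    · intro j
      have hk : ε (Sum.inr (i, j)) = 1 :=
        cond_unique (hx (Sum.inr (i, j))) (show Cond 1 (eval x (r (Sum.inr (i, j)))) by
          simpa [Cond, hr] using h2 j)
      have hyt := hy (Sum.inr (i, j))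
      rw [hk] at hyt
      simpa [Cond, hr] using hyt
  set G : (ι → Fin 3) → Set (Fin n → ℝ) := fun ε => cellSet r ε ∩ S with hG
  have hGsa : ∀ ε, IsSemialgebraic (G ε) := fun ε => sa_inter (sa_cellSet r ε) hSsa
  have hGpw : Pairwise fun ε ε' => Disjoint (G ε) (G ε') := by
    intro ε ε' hne
    refine Set.disjoint_left.2 fun x hx hx' => hne ?_
    funext t
    have h1 : Cond (ε t) (eval x (r t)) := by
      have := hx.1
      simp only [cellSet, Set.mem_iInter, Set.mem_setOf_eq] at this
      exact this t
    have h2 : Cond (ε' t) (eval x (r t)) := by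
      have := hx'.1
      simp only [cellSet, Set.mem_iInter, Set.mem_setOf_eq] at this
      exact this t
    exact cond_unique h1 h2
  have hGU : (⋃ ε, G ε) = S := by
    apply Set.Subset.antisymm
    · exact Set.iUnion_subset fun ε => Set.inter_subset_right
    · intro x hx
      rw [Set.mem_iUnion]
      refine ⟨fun t => sgn3 (eval x (r t)), ?_, hx⟩
      simp only [cellSet, Set.mem_iInter, Set.mem_setOf_eq]
      exact fun t => cond_sgn3 _
  have h1 := chi_fintype χ₁ n G hGsa hGpw
  have h2 := chi_fintype χ₂ n G hGsa hGpw
  rw [hGU] at h1 h2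
  rw [h1, h2]
  refine Finset.sum_congr rfl fun ε _ => ?_
  rcases Set.eq_empty_or_nonempty (G ε) with h | h
  · rw [h, chi_empty, chi_empty]
  · obtain ⟨x, hx⟩ := h
    have hsub : cellSet r ε ⊆ S := fun y hy => mem_transfer ε x y hx.1 hy hx.2
    have hGe : G ε = cellSet r ε := by
      rw [hG]
      exact Set.inter_eq_left.2 hsub
    rw [hGe]
    exact eq_on_cell χ₁ χ₂ r ε (fun y hy => hb y (hsub hy))

end Aux3

section Aux4
open MvPolynomial

/-- Inversion in the unit sphere. -/
noncomputable def invMap {k : ℕ} (x : Fin k → ℝ) : Fin k → ℝ :=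
  fun i => (∑ j, x j ^ 2)⁻¹ * x i

lemma rho_invMap {k : ℕ} (x : Fin k → ℝ) (hx : (∑ j, x j ^ 2) ≠ 0) :
    (∑ j, invMap x j ^ 2) = (∑ j, x j ^ 2)⁻¹ := by
  have h : (∑ j, invMap x j ^ 2)
      = (∑ j, x j ^ 2)⁻¹ ^ 2 * (∑ j, x j ^ 2) := by
    rw [Finset.mul_sum]
    exact Finset.sum_congr rfl fun j _ => by rw [invMap]; ring
  rw [h, sq, mul_assoc, inv_mul_cancel₀ hx, mul_one]

lemma invMap_invMap {k : ℕ} (x : Fin k → ℝ) (hx : (∑ j, x j ^ 2) ≠ 0) :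
    invMap (invMap x) = x := by
  funext i
  show (∑ j, invMap x j ^ 2)⁻¹ * invMap x i = x i
  rw [rho_invMap x hx, inv_inv, invMap]
  field_simp

/-- Substitution of `x ↦ x/|x|²` into a polynomial, with denominators cleared. -/
noncomputable def invPoly {k : ℕ} (p : MvPolynomial (Fin k) ℝ) : MvPolynomial (Fin k) ℝ :=
  ∑ α ∈ p.support, monomial α (coeff α p) * (rhoP k) ^ (p.totalDegree - α.sum fun _ e => e)

lemma eval_invPoly {k : ℕ} (p : MvPolynomial (Fin k) ℝ) (y : Fin k → ℝ)
    (hy : (∑ j, y j ^ 2) ≠ 0) :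
    eval y (invPoly p) = (∑ j, y j ^ 2) ^ p.totalDegree * eval (invMap y) p := by
  rw [invPoly, map_sum, eval_eq (invMap y) p, Finset.mul_sum]
  refine Finset.sum_congr rfl fun α hα => ?_
  rw [map_mul, eval_monomial, map_pow, eval_rhoP]
  have hprod : (∏ i ∈ α.support, invMap y i ^ α i)
      = ((∑ j, y j ^ 2)⁻¹) ^ (α.sum fun _ e => e) * ∏ i ∈ α.support, y i ^ α i := by
    rw [Finsupp.sum, ← Finset.prod_pow_eq_pow_sum, ← Finset.prod_mul_distrib]
    exact Finset.prod_congr rfl fun i _ => by rw [invMap, mul_pow]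
  rw [hprod, pow_sub₀ _ hy (le_totalDegree hα), inv_pow]
  have hmon : (α.prod fun n e => y n ^ e) = ∏ i ∈ α.support, y i ^ α i := rfl
  rw [hmon]
  ring

lemma invPoly_zero_iff {k : ℕ} (p : MvPolynomial (Fin k) ℝ) (y : Fin k → ℝ)
    (hy : 0 < ∑ j, y j ^ 2) :
    eval y (invPoly p) = 0 ↔ eval (invMap y) p = 0 := by
  rw [eval_invPoly p y hy.ne']
  have h : ((∑ j, y j ^ 2) ^ p.totalDegree) ≠ 0 := pow_ne_zero _ hy.ne'
  simp [mul_eq_zero, h]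

lemma invPoly_pos_iff {k : ℕ} (p : MvPolynomial (Fin k) ℝ) (y : Fin k → ℝ)
    (hy : 0 < ∑ j, y j ^ 2) :
    0 < eval y (invPoly p) ↔ 0 < eval (invMap y) p := by
  rw [eval_invPoly p y hy.ne']
  have h : 0 < ((∑ j, y j ^ 2) ^ p.totalDegree) := pow_pos hy _
  constructor
  · intro hpos
    by_contra h'
    push_neg at h'
    nlinarith
  · exact fun hpos => mul_pos h hpos

lemma sa_invImage {k : ℕ} {B : Set (Fin k → ℝ)} (hB : IsSemialgebraic B) :
    IsSemialgebraic {y : Fin k → ℝ | (0 < ∑ j, y j ^ 2) ∧ invMap y ∈ B} := by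
  obtain ⟨N, M, p, q, hBeq⟩ := hB
  refine ⟨N, M + 1, fun i => invPoly (p i),
    fun i => Fin.cons (rhoP k) (fun j => invPoly (q i j)), ?_⟩
  ext y
  simp only [Set.mem_setOf_eq, Set.mem_iUnion, hBeq]
  constructor
  · rintro ⟨hpos, i, h1, h2⟩
    refine ⟨i, (invPoly_zero_iff _ _ hpos).2 h1, ?_⟩
    intro j
    refine Fin.cases ?_ (fun j' => ?_) j
    · rw [Fin.cons_zero, eval_rhoP]; exact hpos
    · rw [Fin.cons_succ]
      exact (invPoly_pos_iff _ _ hpos).2 (h2 j')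
  · rintro ⟨i, h1, h2⟩
    have hpos : 0 < ∑ j, y j ^ 2 := by
      have h0 := h2 0
      rwa [Fin.cons_zero, eval_rhoP] at h0
    refine ⟨hpos, i, (invPoly_zero_iff _ _ hpos).1 h1, fun j => ?_⟩
    have hj := h2 j.succ
    rw [Fin.cons_succ] at hj
    exact (invPoly_pos_iff _ _ hpos).1 hj

lemma continuous_rho {k : ℕ} : Continuous fun x : Fin k → ℝ => ∑ j, x j ^ 2 :=
  continuous_finset_sum _ fun i _ => (continuous_apply i).pow 2

end Aux4

section Main
open MvPolynomial

lemma eq_general (χ₁ χ₂ : ModifiedEulerChar) (n : ℕ) (S : Set (Fin n → ℝ))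
    (hS : IsSemialgebraic S) : χ₁.toFun n S = χ₂.toFun n S := by
  classical
  set A := S ∩ {x | (∑ i, x i ^ 2) ≤ 1} with hA
  set B := S ∩ {x | 1 < (∑ i, x i ^ 2)} with hB
  have hAsa : IsSemialgebraic A := sa_inter hS (sa_le_ball 1)
  have hgt : IsSemialgebraic {x : Fin n → ℝ | 1 < (∑ i, x i ^ 2)} := by
    have h := sa_pos (rhoP n - C 1)
    have he : {x : Fin n → ℝ | 0 < eval x (rhoP n - C 1)} = {x | 1 < (∑ i, x i ^ 2)} := by
      ext x
      simp only [Set.mem_setOf_eq, map_sub, eval_C, eval_rhoP, sub_pos]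
    rwa [he] at h
  have hBsa : IsSemialgebraic B := sa_inter hS hgt
  have hdisj : Disjoint A B := by
    refine Set.disjoint_left.2 fun x hx hx' => ?_
    have h1 := hx.2
    have h2 := hx'.2
    simp only [Set.mem_setOf_eq] at h1 h2
    linarith
  have hunion : A ∪ B = S := by
    ext x
    constructor
    · rintro (h | h) <;> exact h.1
    · intro h
      rcases le_or_gt (∑ i, x i ^ 2) 1 with h' | h'
      · exact Or.inl ⟨h, h'⟩
      · exact Or.inr ⟨h, h'⟩
  have hA1 := eq_on_bounded χ₁ χ₂ hAsa (R := 1) (fun x hx => hx.2)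
  have hBpos : ∀ x ∈ B, (0:ℝ) < ∑ i, x i ^ 2 := fun x hx => lt_trans one_pos hx.2
  set T := {y : Fin n → ℝ | (0 < ∑ j, y j ^ 2) ∧ invMap y ∈ B} with hT
  have hTsa : IsSemialgebraic T := sa_invImage hBsa
  have hTb : ∀ y ∈ T, (∑ i, y i ^ 2) ≤ 1 := by
    rintro y ⟨hy, hmem⟩
    have h1 : 1 < ∑ j, invMap y j ^ 2 := hmem.2
    rw [rho_invMap y hy.ne'] at h1
    have hmul : (∑ j, y j ^ 2) * (∑ j, y j ^ 2)⁻¹ = 1 := mul_inv_cancel₀ hy.ne'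
    nlinarith
  have hT1 := eq_on_bounded χ₁ χ₂ hTsa (R := 1) hTb
  have memT_of_memB : ∀ x, x ∈ B → invMap x ∈ T := by
    intro x hx
    have hxpos := hBpos x hx
    refine ⟨?_, ?_⟩
    · rw [rho_invMap x hxpos.ne']
      exact inv_pos.2 hxpos
    · rw [invMap_invMap x hxpos.ne']
      exact hx
  have hcont : ∀ (W : Set (Fin n → ℝ)), (∀ x ∈ W, (∑ j, x j ^ 2) ≠ 0) →
      Continuous fun x : ↥W => invMap x.1 := by
    intro W hW
    refine continuous_pi fun i => Continuous.mul ?_ ?_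
    · exact (continuous_rho.comp continuous_subtype_val).inv₀ fun x => hW x.1 x.2
    · exact (continuous_apply i).comp continuous_subtype_val
  let e : ↥B ≃ₜ ↥T :=
    { toFun := fun x => ⟨invMap x.1, memT_of_memB x.1 x.2⟩
      invFun := fun y => ⟨invMap y.1, y.2.2⟩
      left_inv := fun x => Subtype.ext (invMap_invMap x.1 (hBpos x.1 x.2).ne')
      right_inv := fun y => Subtype.ext (invMap_invMap y.1 y.2.1.ne')
      continuous_toFun :=
        Continuous.subtype_mk (hcont B (fun x hx => (hBpos x hx).ne')) _
      continuous_invFun :=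
        Continuous.subtype_mk (hcont T (fun y hy => hy.1.ne')) _ }
  have he_app : ∀ x : ↥B, ((e x : ↥T) : Fin n → ℝ) = invMap x.1 := fun _ => rfl
  have hBT : SemialgHomeo B T := by
    refine ⟨e, ?_⟩
    have hgraph : {z : Fin (n + n) → ℝ | ∃ x : ↥B,
        (∀ i : Fin n, z (Fin.castAdd n i) = (x : Fin n → ℝ) i) ∧
        (∀ j : Fin n, z (Fin.natAdd n j) = ((e x : ↥T) : Fin n → ℝ) j)}
        = {z : Fin (n + n) → ℝ | (fun i => z (Fin.castAdd n i)) ∈ B} ∩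
          ⋂ i : Fin n, {z : Fin (n + n) → ℝ |
            eval z (X (Fin.natAdd n i) * rename (Fin.castAdd n) (rhoP n)
              - X (Fin.castAdd n i)) = 0} := by
      ext z
      simp only [Set.mem_setOf_eq, Set.mem_inter_iff, Set.mem_iInter, map_sub, map_mul,
        eval_X, eval_rename, eval_rhoP, Function.comp_apply, sub_eq_zero]
      constructor
      · rintro ⟨x, hx1, hx2⟩
        have hxpos := hBpos x.1 x.2
        have hρ : (∑ j, z (Fin.castAdd n j) ^ 2) = ∑ j, (x : Fin n → ℝ) j ^ 2 :=
          Finset.sum_congr rfl fun j _ => by rw [hx1 j]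
        constructor
        · have hxeq : (fun i => z (Fin.castAdd n i)) = (x : Fin n → ℝ) := funext hx1
          rw [hxeq]; exact x.2
        · intro i
          rw [hx2 i, he_app x, hρ, hx1 i]
          simp only [invMap]
          field_simp
      · rintro ⟨hz, heq⟩
        refine ⟨⟨fun i => z (Fin.castAdd n i), hz⟩, fun i => rfl, fun j => ?_⟩
        rw [he_app]
        simp only [invMap]
        have hρpos : (0:ℝ) < ∑ i, z (Fin.castAdd n i) ^ 2 := hBpos _ hz
        have heqj := heq j
        calc z (Fin.natAdd n j)
            = z (Fin.natAdd n j) * (∑ i, z (Fin.castAdd n i) ^ 2)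
              * (∑ i, z (Fin.castAdd n i) ^ 2)⁻¹ := by
              field_simp
          _ = (∑ i, z (Fin.castAdd n i) ^ 2)⁻¹ * z (Fin.castAdd n j) := by
              rw [heqj]; ring
    rw [hgraph]
    exact sa_inter (sa_comp (Fin.castAdd n) hBsa) (sa_iInter fun i => sa_zero _)
  have e₁ := χ₁.homeo_inv n n B T hBsa hTsa hBT
  have e₂ := χ₂.homeo_inv n n B T hBsa hTsa hBT
  have c₁ := chi_pair χ₁ n hAsa hBsa hdisj
  have c₂ := chi_pair χ₂ n hAsa hBsa hdisj
  rw [hunion] at c₁ c₂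
  omega

end Main
/-- There is at most one modified Euler characteristic: any two
integer-valued invariants of semialgebraic sets satisfying (i) additivity on finite
disjoint unions, (ii) agreement with the Euler characteristic on compact semialgebraic
sets, and (iii) invariance under semialgebraic homeomorphisms, coincide on all
semialgebraic sets. -/
theorem stmt_7 (χ₁ χ₂ : ModifiedEulerChar) (n : ℕ) (S : Set (Fin n → ℝ))
    (hS : IsSemialgebraic S) :
    χ₁.toFun n S = χ₂.toFun n S := by
  exact eq_general χ₁ χ₂ n S hS
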